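/- Let T be a finite tree, let v1 be a vertex in the median of T, and let v1, v2, ..., vr be a path in T (a sequence of distinct vertices in which consecutive vertices are adjacent) such that v2 is not in the median of T. Then s(v1) < s(v2) < ... < s(vr). -/

import Mathlib

/-- The status (transmission index) of a vertex: the sum of distances to all vertices. -/
noncomputable def SimpleGraph.status {V : Type*} [Fintype V] (G : SimpleGraph V) (v : V) : ℕ :=
  ∑ u : V, G.dist v u

/-- A vertex is in the median if it has minimum status. -/
def SimpleGraph.InMedian {V : Type*} [Fintype V] (G : SimpleGraph V) (v : V) : Prop :=
  ∀ u : V, G.status v ≤ G.status u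

open Finset

namespace SimpleGraph

variable {V : Type*} {G : SimpleGraph V}

/-- In a tree, for an edge `a b`, every vertex `w` has `dist w a ≠ dist w b`. -/
lemma IsTree.dist_ne_of_adj' (hT : G.IsTree) {a b w : V} (hab : G.Adj a b) :
    G.dist w a ≠ G.dist w b := by
  classical
  intro heq
  have hconn := hT.isConnected
  obtain ⟨Q, hQp, hQl⟩ := hconn.exists_path_of_dist w a
  have hb : b ∉ Q.support := by
    intro hb
    have h1 : G.dist w b ≤ (Q.takeUntil b hb).length := dist_le _
    have h2 : (Q.takeUntil b hb).length + (Q.dropUntil b hb).length = Q.length := by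
      rw [← Walk.length_append, Walk.take_spec]
    have h3 : (Q.dropUntil b hb).length ≠ 0 := by
      intro h0
      exact hab.ne' (Walk.eq_of_length_eq_zero h0)
    omega
  have hpath : (Q.concat hab).IsPath := by
    rw [← Walk.isPath_reverse_iff, Walk.reverse_concat]
    refine Walk.IsPath.cons (by rwa [Walk.isPath_reverse_iff]) ?_
    simpa [Walk.support_reverse] using hb
  obtain ⟨R, hRp, hRl⟩ := hconn.exists_path_of_dist w b
  have := (hT.existsUnique_path w b).unique hpath hRp
  have : (Q.concat hab).length = R.length := by rw [this]
  rw [Walk.length_concat, hQl, hRl, heq] at this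
  omega

/-- In a tree, along a path `a - b - c`, if `w` is farther from `b` than from `a`,
then it is farther from `c` than from `b`. -/
lemma IsTree.dist_step (hT : G.IsTree) {a b c w : V} (hab : G.Adj a b) (hbc : G.Adj b c)
    (hac : a ≠ c) (h : G.dist w b = G.dist w a + 1) : G.dist w c = G.dist w b + 1 := by
  classical
  have hconn := hT.isConnected
  have htri : G.dist w c ≤ G.dist w b + 1 := by
    have := hconn.dist_triangle (u := w) (v := b) (w := c)
    have h1 : G.dist b c = 1 := dist_eq_one_iff_adj.mpr hbc
    omega
  have htri2 : G.dist w b ≤ G.dist w c + 1 := by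
    have := hconn.dist_triangle (u := w) (v := c) (w := b)
    have h1 : G.dist c b = 1 := dist_eq_one_iff_adj.mpr hbc.symm
    omega
  have hne := hT.dist_ne_of_adj' (w := w) hbc
  rcases lt_or_ge (G.dist w c) (G.dist w b) with hlt | hle
  · exfalso
    have hc : G.dist w c = G.dist w a := by omega
    obtain ⟨Q, hQp, hQl⟩ := hconn.exists_path_of_dist w a
    obtain ⟨R, hRp, hRl⟩ := hconn.exists_path_of_dist w c
    have hbQ : b ∉ Q.support := by
      intro hb
      have h1 : G.dist w b ≤ (Q.takeUntil b hb).length := dist_le _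
      have h2 : (Q.takeUntil b hb).length ≤ Q.length := Walk.length_takeUntil_le _ _
      omega
    have hbR : b ∉ R.support := by
      intro hb
      have h1 : G.dist w b ≤ (R.takeUntil b hb).length := dist_le _
      have h2 : (R.takeUntil b hb).length ≤ R.length := Walk.length_takeUntil_le _ _
      omega
    have hpQ : (Q.concat hab).IsPath := by
      rw [← Walk.isPath_reverse_iff, Walk.reverse_concat]
      refine Walk.IsPath.cons (by rwa [Walk.isPath_reverse_iff]) ?_
      simpa [Walk.support_reverse] using hbQ
    have hpR : (R.concat hbc.symm).IsPath := by
      rw [← Walk.isPath_reverse_iff, Walk.reverse_concat]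
      refine Walk.IsPath.cons (by rwa [Walk.isPath_reverse_iff]) ?_
      simpa [Walk.support_reverse] using hbR
    have heq := (hT.existsUnique_path w b).unique hpQ hpR
    have hsupp : (Q.concat hab).reverse.support = (R.concat hbc.symm).reverse.support := by
      rw [heq]
    rw [Walk.reverse_concat, Walk.reverse_concat, Walk.support_cons, Walk.support_cons,
        Q.reverse.support_eq_cons, R.reverse.support_eq_cons] at hsupp
    simp only [List.cons.injEq] at hsupp
    exact hac hsupp.2.1
  · omega



open Classical in
lemma IsTree.status_cast_eq [Fintype V] (hT : G.IsTree) {a b : V} (hab : G.Adj a b) :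
    (G.status b : ℤ) = G.status a
      + (2 * ((univ.filter (fun w => G.dist a w < G.dist b w)).card : ℤ) - Fintype.card V) := by
  classical
  have hconn := hT.isConnected
  have key : ∀ w : V, (G.dist b w : ℤ)
      = G.dist a w + (2 * (if G.dist a w < G.dist b w then (1:ℤ) else 0) - 1) := by
    intro w
    have hne : G.dist w a ≠ G.dist w b := hT.dist_ne_of_adj' hab
    have h1 : G.dist b w ≤ G.dist a w + 1 := by
      have := hconn.dist_triangle (u := b) (v := a) (w := w)
      have : G.dist b a = 1 := dist_eq_one_iff_adj.mpr hab.symm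
      omega
    have h2 : G.dist a w ≤ G.dist b w + 1 := by
      have := hconn.dist_triangle (u := a) (v := b) (w := w)
      have : G.dist a b = 1 := dist_eq_one_iff_adj.mpr hab
      omega
    rw [dist_comm (G := G) (u := w) (v := a), dist_comm (G := G) (u := w) (v := b)] at hne
    by_cases hw : G.dist a w < G.dist b w
    · have : G.dist b w = G.dist a w + 1 := by omega
      simp [hw, this]
    · have : G.dist a w = G.dist b w + 1 := by omega
      simp [hw]; omega
  have : (G.status b : ℤ) = ∑ w : V, (G.dist b w : ℤ) := by
    unfold status; push_cast; rfl
  rw [this]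
  simp_rw [key]
  rw [Finset.sum_add_distrib]
  have h1 : ∑ w : V, (G.dist a w : ℤ) = (G.status a : ℤ) := by
    unfold status; push_cast; rfl
  rw [h1]
  congr 1
  rw [Finset.sum_sub_distrib, ← Finset.mul_sum, Finset.sum_boole, Finset.sum_const]
  rw [Finset.card_univ]
  push_cast
  ring

open Classical in
lemma IsTree.bset_ssubset [Fintype V] (hT : G.IsTree) {a b c : V}
    (hab : G.Adj a b) (hbc : G.Adj b c) (hac : a ≠ c) :
    (univ.filter (fun w => G.dist a w < G.dist b w))
      ⊂ (univ.filter (fun w => G.dist b w < G.dist c w)) := by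
  classical
  have hconn := hT.isConnected
  constructor
  · intro w hw
    simp only [mem_filter, mem_univ, true_and] at hw ⊢
    have hne : G.dist w a ≠ G.dist w b := hT.dist_ne_of_adj' hab
    have h1 : G.dist b w ≤ G.dist a w + 1 := by
      have := hconn.dist_triangle (u := b) (v := a) (w := w)
      have : G.dist b a = 1 := dist_eq_one_iff_adj.mpr hab.symm
      omega
    have hb : G.dist w b = G.dist w a + 1 := by
      rw [dist_comm (G := G) (u := w) (v := a), dist_comm (G := G) (u := w) (v := b)]
      omega
    have := hT.dist_step hab hbc hac hb
    rw [dist_comm (G := G) (u := b) (v := w), dist_comm (G := G) (u := c) (v := w)]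
    omega
  · intro hsub
    have hb : b ∈ univ.filter (fun w => G.dist b w < G.dist c w) := by
      simp only [mem_filter, mem_univ, true_and]
      have : 0 < G.dist c b := hconn.pos_dist_of_ne hbc.ne'
      rw [dist_self]
      omega
    have := hsub hb
    simp only [mem_filter, mem_univ, true_and, dist_self] at this
    omega

end SimpleGraph

theorem status_strictMono_on_path_from_median {V : Type*} [Fintype V]
    (G : SimpleGraph V) (hT : G.IsTree)
    (r : ℕ) (hr : 2 ≤ r) (p : Fin r → V) (hinj : Function.Injective p)
    (hadj : ∀ i : Fin r, ∀ h : (i : ℕ) + 1 < r, G.Adj (p i) (p ⟨(i : ℕ) + 1, h⟩))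
    (h₁ : G.InMedian (p ⟨0, by omega⟩))
    (h₂ : ¬ G.InMedian (p ⟨1, by omega⟩)) :
    StrictMono (fun i : Fin r => G.status (p i)) := by
  classical
  set n : ℕ := Fintype.card V with hn
  -- the B-sets along the path
  set B : ∀ i : ℕ, i + 1 < r → Finset V := fun i h =>
    Finset.univ.filter (fun w => G.dist (p ⟨i, by omega⟩) w < G.dist (p ⟨i + 1, h⟩) w) with hB
  have hstep : ∀ (i : ℕ) (h : i + 1 < r),
      (G.status (p ⟨i + 1, h⟩) : ℤ)
        = G.status (p ⟨i, by omega⟩) + (2 * ((B i h).card : ℤ) - n) := by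
    intro i h
    have := hT.status_cast_eq (hadj ⟨i, by omega⟩ (by simpa using h))
    convert this using 4
  -- the invariant: each increment is at least 1
  have hInv : ∀ (i : ℕ) (h : i + 1 < r), (1 : ℤ) ≤ 2 * ((B i h).card : ℤ) - n := by
    intro i
    induction i with
    | zero =>
      intro h
      have hle : G.status (p ⟨0, by omega⟩) ≤ G.status (p ⟨1, by omega⟩) := h₁ _
      have hne : G.status (p ⟨0, by omega⟩) ≠ G.status (p ⟨1, by omega⟩) := by
        intro heq
        exact h₂ (fun u => heq ▸ h₁ u)
      have := hstep 0 h
      have hlt : (G.status (p ⟨0, by omega⟩) : ℤ) < G.status (p ⟨1, by omega⟩) := by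
        exact_mod_cast lt_of_le_of_ne hle hne
      have h01 : (p ⟨0 + 1, h⟩ : V) = p ⟨1, by omega⟩ := rfl
      rw [h01] at this
      omega
    | succ j ih =>
      intro h
      have hj : j + 1 < r := by omega
      have hss : B j hj ⊂ B (j + 1) h := by
        have hac : p ⟨j, by omega⟩ ≠ p ⟨j + 2, by omega⟩ := by
          intro heq
          have := hinj heq
          simp [Fin.ext_iff] at this
        have := hT.bset_ssubset (hadj ⟨j, by omega⟩ (by simpa using hj))
          (hadj ⟨j + 1, by omega⟩ (by simpa using h)) hac
        simpa [hB] using this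
      have hcard : (B j hj).card < (B (j + 1) h).card := Finset.card_lt_card hss
      have := ih hj
      have : ((B j hj).card : ℤ) < ((B (j + 1) h).card : ℤ) := by exact_mod_cast hcard
      omega
  -- single-step strict increase
  have hsingle : ∀ (i : ℕ) (h : i + 1 < r),
      G.status (p ⟨i, by omega⟩) < G.status (p ⟨i + 1, h⟩) := by
    intro i h
    have h1 := hstep i h
    have h2 := hInv i h
    have : (G.status (p ⟨i, by omega⟩) : ℤ) < G.status (p ⟨i + 1, h⟩) := by omega
    exact_mod_cast this
  -- conclude strict monotonicity
  intro i j hij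
  simp only
  obtain ⟨i, hi⟩ := i
  obtain ⟨j, hj⟩ := j
  simp only [Fin.mk_lt_mk] at hij
  induction j with
  | zero => omega
  | succ k ihk =>
    have hk : k < r := by omega
    rcases Nat.lt_or_ge i k with hik | hik
    · calc G.status (p ⟨i, hi⟩) < G.status (p ⟨k, hk⟩) := ihk hk hik
        _ < G.status (p ⟨k + 1, hj⟩) := hsingle k hj
    · have : i = k := by omega
      subst this
      exact hsingle i hj
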